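/- Fix θ₀ ∈ ℝ^p, σ₀ ≥ 0, ε_test ≥ 0, λ ≥ 0, and define F(θ) = (1+λ)(σ₀² + ‖θ - θ₀‖₂²) + ε_test² ‖θ‖₂² + 2√(2/π) ε_test ‖θ‖₂ (σ₀² + ‖θ - θ₀‖₂²)^{1/2}. If θ* = (1 + γ₀)^{-1} θ₀ where γ₀ ≥ 0 satisfies the fixed-point equations γ₀ = (ε_test² + √(2/π) ε_test A) / (1 + λ + √(2/π) ε_test / A) with A = (1/‖θ₀‖₂) ((1+γ₀)² σ₀² + γ₀² ‖θ₀‖₂²)^{1/2}, then θ* is a global minimizer of F. -/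

import Mathlib

open RealInnerProductSpace

/-- 1-Lipschitz property of `u ↦ √(σ² + u²)`. -/
lemma sqrt_lip_aux (σ u v : ℝ) :
    |Real.sqrt (σ^2 + u^2) - Real.sqrt (σ^2 + v^2)| ≤ |u - v| := by
  have hP : (0:ℝ) ≤ σ^2 + u^2 := by positivity
  have hQ : (0:ℝ) ≤ σ^2 + v^2 := by positivity
  set sp := Real.sqrt (σ^2+u^2) with hsp
  set sq := Real.sqrt (σ^2+v^2) with hsq
  have hsp0 : 0 ≤ sp := Real.sqrt_nonneg _
  have hsq0 : 0 ≤ sq := Real.sqrt_nonneg _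
  have hsp2 : sp^2 = σ^2+u^2 := Real.sq_sqrt hP
  have hsq2 : sq^2 = σ^2+v^2 := Real.sq_sqrt hQ
  have hprod : σ^2 + u*v ≤ sp * sq := by
    rcases le_or_gt (σ^2 + u*v) 0 with h | h
    · exact h.trans (mul_nonneg hsp0 hsq0)
    · have h1 : sp*sq = Real.sqrt ((σ^2+u^2)*(σ^2+v^2)) := (Real.sqrt_mul hP _).symm
      rw [h1]
      have h2 : (σ^2+u*v)^2 ≤ (σ^2+u^2)*(σ^2+v^2) := by
        nlinarith [sq_nonneg (u-v), sq_nonneg σ]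
      exact (Real.le_sqrt h.le (by positivity)).mpr h2
  have hkey : (sp - sq)^2 ≤ (u-v)^2 := by nlinarith
  calc |sp - sq| = Real.sqrt ((sp-sq)^2) := (Real.sqrt_sq_eq_abs _).symm
    _ ≤ Real.sqrt ((u-v)^2) := Real.sqrt_le_sqrt hkey
    _ = |u-v| := Real.sqrt_sq_eq_abs _

/-- Scalar computation: `(A‖θ*‖)² = σ₀² + ‖θ* − θ₀‖²`. -/
lemma bA_aux (σ₀ γ₀ r A : ℝ) (hγ₀ : 0 ≤ γ₀) (hr : 0 < r)
    (hA : A = (1 / r) * Real.sqrt ((1 + γ₀)^2 * σ₀^2 + γ₀^2 * r^2)) :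
    (A * ((1+γ₀)⁻¹ * r))^2 = σ₀^2 + ((γ₀ * (1+γ₀)⁻¹) * r)^2 := by
  have hg : (0:ℝ) < 1 + γ₀ := by linarith
  have hS2 : (Real.sqrt ((1+γ₀)^2*σ₀^2 + γ₀^2*r^2))^2 = (1+γ₀)^2*σ₀^2 + γ₀^2*r^2 :=
    Real.sq_sqrt (by positivity)
  rw [hA]
  field_simp
  rw [mul_comm (γ₀^2) (r^2)] at hS2
  nlinarith [hS2, sq_nonneg (1+γ₀), hg]

/-- Coefficient inequality: `cε(1+A)² ≤ (A(1+λ)+cε) + (Aε²+cεA²)`. -/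
lemma coef_aux (c eps lam A : ℝ) (hc0 : 0 ≤ c) (hc1 : c ≤ 1) (heps : 0 ≤ eps)
    (hlam : 0 ≤ lam) (hA : 0 ≤ A) :
    c*eps*(1+A)^2 ≤ (A*(1+lam) + c*eps) + (A*eps^2 + c*eps*A^2) := by
  have h0 : 0 ≤ 1 + lam + eps^2 - 2*(c*eps) := by
    nlinarith [sq_nonneg (eps - c), mul_nonneg (sub_nonneg.mpr hc1) (by linarith : (0:ℝ) ≤ 1 + c)]
  nlinarith [mul_nonneg hA h0]

/-- Final linear bookkeeping. -/
lemma final_aux (al be ceps K bθ bs aθ as A ip1 ip2 : ℝ)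
    (e1 : al*(bθ^2 - bs^2) = al*(2*ip2 + K^2))
    (e2 : be*(aθ^2 - as^2) = be*(2*ip1 + K^2))
    (hip : al*ip2 + be*ip1 = 0)
    (h3 : ceps*(bθ - A*aθ)^2 ≤ (al+be)*K^2) :
    al*bs^2 + be*as^2 ≤ al*bθ^2 + be*aθ^2 - ceps*(bθ - A*aθ)^2 := by
  nlinarith [e1, e2, hip, h3]

set_option maxHeartbeats 1000000 in
/-- The Pareto-optimal estimator θ* = (1+γ₀)⁻¹ θ₀ globally minimizes the
weighted combination F of standard and adversarial risks, where γ₀ satisfies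
the given fixed-point equations. -/
theorem stmt_5 (p : ℕ) (θ₀ : EuclideanSpace ℝ (Fin p)) (hθ₀ : θ₀ ≠ 0)
    (σ₀ εtest lam : ℝ) (hσ : 0 ≤ σ₀) (hε : 0 ≤ εtest) (hlam : 0 ≤ lam)
    (F : EuclideanSpace ℝ (Fin p) → ℝ)
    (hF : ∀ θ, F θ = (1 + lam) * (σ₀^2 + ‖θ - θ₀‖^2) + εtest^2 * ‖θ‖^2
      + 2 * Real.sqrt (2 / Real.pi) * εtest * ‖θ‖ * Real.sqrt (σ₀^2 + ‖θ - θ₀‖^2))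
    (γ₀ A : ℝ) (hγ₀ : 0 ≤ γ₀)
    (hA : A = (1 / ‖θ₀‖) * Real.sqrt ((1 + γ₀)^2 * σ₀^2 + γ₀^2 * ‖θ₀‖^2))
    (hfix : γ₀ = (εtest^2 + Real.sqrt (2 / Real.pi) * εtest * A)
      / (1 + lam + Real.sqrt (2 / Real.pi) * εtest / A))
    (θstar : EuclideanSpace ℝ (Fin p)) (hθstar : θstar = (1 + γ₀)⁻¹ • θ₀) :
    ∀ θ, F θstar ≤ F θ := by
  have hπ : (0:ℝ) < Real.pi := Real.pi_pos
  set c := Real.sqrt (2 / Real.pi) with hc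
  have hc0 : 0 ≤ c := Real.sqrt_nonneg _
  have hc1 : c ≤ 1 := by
    rw [hc, show (1:ℝ) = Real.sqrt 1 by simp]
    apply Real.sqrt_le_sqrt
    rw [div_le_one hπ]
    linarith [Real.pi_gt_three]
  have hr : 0 < ‖θ₀‖ := norm_pos_iff.mpr hθ₀
  have hg : (0:ℝ) < 1 + γ₀ := by linarith
  have hanorm : ‖θstar‖ = (1+γ₀)⁻¹ * ‖θ₀‖ := by
    rw [hθstar, norm_smul, Real.norm_eq_abs, abs_of_pos (inv_pos.mpr hg)]
  have hdvec : θstar - θ₀ = ((1+γ₀)⁻¹ - 1) • θ₀ := by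
    rw [hθstar, sub_smul, one_smul]
  have hdnorm : ‖θstar - θ₀‖ = (γ₀ * (1+γ₀)⁻¹) * ‖θ₀‖ := by
    rw [hdvec, norm_smul, Real.norm_eq_abs]
    congr 1
    have h1 : (1+γ₀)⁻¹ - 1 = -(γ₀ * (1+γ₀)⁻¹) := by
      field_simp
      ring
    rw [h1, abs_neg, abs_of_nonneg (by positivity)]
  have hA0 : 0 ≤ A := by
    rw [hA]; positivity
  by_cases hAz : A = 0
  · -- degenerate case: σ₀ = 0, γ₀ = 0, εtest = 0
    have hS : (1 + γ₀)^2 * σ₀^2 + γ₀^2 * ‖θ₀‖^2 = 0 := by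
      rw [hAz] at hA
      have h1 : Real.sqrt ((1 + γ₀)^2 * σ₀^2 + γ₀^2 * ‖θ₀‖^2) = 0 := by
        rcases mul_eq_zero.mp hA.symm with h | h
        · exact absurd h (by positivity)
        · exact h
      exact (Real.sqrt_eq_zero (by positivity)).mp h1
    obtain ⟨hS1, hS2⟩ := (add_eq_zero_iff_of_nonneg (by positivity) (by positivity)).mp hS
    have hσ0 : σ₀ = 0 := by
      rcases mul_eq_zero.mp hS1 with h | h
      · exact absurd h (by positivity)
      · exact pow_eq_zero_iff two_ne_zero |>.mp h
    have hγz : γ₀ = 0 := by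
      rcases mul_eq_zero.mp hS2 with h | h
      · exact pow_eq_zero_iff two_ne_zero |>.mp h
      · exact absurd h (by positivity)
    have hεz : εtest = 0 := by
      rw [hγz, hAz] at hfix
      simp only [mul_zero, add_zero, div_zero, mul_zero, zero_div] at hfix
      have h3 : εtest^2 = 0 := by
        rcases div_eq_zero_iff.mp hfix.symm with h | h
        · exact h
        · linarith
      exact pow_eq_zero_iff two_ne_zero |>.mp h3
    have hθeq : θstar = θ₀ := by rw [hθstar, hγz]; norm_num
    intro θ
    rw [hF, hF, hθeq, hσ0, hεz]
    simp
    positivity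
  · -- main case A > 0
    have hApos : 0 < A := lt_of_le_of_ne hA0 (Ne.symm hAz)
    -- b* = A * ‖θstar‖
    have hbA : Real.sqrt (σ₀^2 + ‖θstar - θ₀‖^2) = A * ‖θstar‖ := by
      have h1 : (A * ‖θstar‖)^2 = σ₀^2 + ‖θstar-θ₀‖^2 := by
        rw [hanorm, hdnorm]
        exact bA_aux σ₀ γ₀ ‖θ₀‖ A hγ₀ hr hA
      rw [← h1, Real.sqrt_sq (mul_nonneg hApos.le (norm_nonneg _))]
    -- the fixed point relation, cleared of divisions
    have hfix' : γ₀ * (A*(1+lam) + c*εtest) = A*εtest^2 + c*εtest*A^2 := by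
      have hden : (0:ℝ) < 1 + lam + c*εtest/A := by positivity
      have h := hfix
      rw [eq_div_iff hden.ne'] at h
      field_simp at h
      linarith [h]
    have hal : (0:ℝ) < A*(1+lam) + c*εtest := by positivity
    -- the stationarity vector equation
    have hscal : (A*(1+lam) + c*εtest) * ((1+γ₀)⁻¹ - 1) + (A*εtest^2 + c*εtest*A^2) * (1+γ₀)⁻¹ = 0 := by
      rw [← hfix']
      field_simp
      ring
    have hvec : (A*(1+lam) + c*εtest) • (θstar - θ₀) + (A*εtest^2 + c*εtest*A^2) • θstar = 0 := by
      rw [hdvec, hθstar, smul_smul, smul_smul, ← add_smul, hscal, zero_smul]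
    intro θ
    set v := θ - θstar with hv
    have hθeq : θ = θstar + v := by rw [hv]; abel
    have hip : (A*(1+lam) + c*εtest) * ⟪θstar - θ₀, v⟫ + (A*εtest^2 + c*εtest*A^2) * ⟪θstar, v⟫ = 0 := by
      have h : ⟪(A*(1+lam) + c*εtest) • (θstar - θ₀) + (A*εtest^2 + c*εtest*A^2) • θstar, v⟫ = (0:ℝ) := by
        rw [hvec, inner_zero_left]
      rw [inner_add_left, real_inner_smul_left, real_inner_smul_left] at h
      exact h
    have hθd : θ - θ₀ = (θstar - θ₀) + v := by rw [hθeq]; abel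
    have hna : ‖θ‖^2 = ‖θstar‖^2 + 2*⟪θstar, v⟫ + ‖v‖^2 := by
      rw [hθeq]; exact norm_add_sq_real θstar v
    have hnd : ‖θ - θ₀‖^2 = ‖θstar - θ₀‖^2 + 2*⟪θstar - θ₀, v⟫ + ‖v‖^2 := by
      rw [hθd]; exact norm_add_sq_real (θstar - θ₀) v
    set bθ := Real.sqrt (σ₀^2 + ‖θ - θ₀‖^2) with hbθ
    have hbθ2 : bθ^2 = σ₀^2 + ‖θ - θ₀‖^2 := Real.sq_sqrt (by positivity)
    have hbθ0 : 0 ≤ bθ := Real.sqrt_nonneg _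
    set bs := Real.sqrt (σ₀^2 + ‖θstar - θ₀‖^2) with hbs
    have hbs2 : bs^2 = σ₀^2 + ‖θstar - θ₀‖^2 := Real.sq_sqrt (by positivity)
    -- Lipschitz bounds
    have hlipa : |‖θ‖ - ‖θstar‖| ≤ ‖v‖ := abs_norm_sub_norm_le θ θstar
    have hlipd : |‖θ - θ₀‖ - ‖θstar - θ₀‖| ≤ ‖v‖ := by
      have h := abs_norm_sub_norm_le (θ - θ₀) (θstar - θ₀)
      have h2 : (θ - θ₀) - (θstar - θ₀) = v := by rw [hv]; abel
      rwa [h2] at h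
    have hlipb : |bθ - bs| ≤ ‖v‖ := by
      have h := sqrt_lip_aux σ₀ ‖θ - θ₀‖ ‖θstar - θ₀‖
      exact h.trans hlipd
    -- bound on the cross term
    have hcross : (bθ - A*‖θ‖)^2 ≤ ((1+A)*‖v‖)^2 := by
      have h1 : |bθ - A*‖θ‖| ≤ (1+A)*‖v‖ := by
        have h2 : bθ - A*‖θ‖ = (bθ - bs) - A*(‖θ‖ - ‖θstar‖) := by rw [hbA]; ring
        rw [h2]
        have h3 : |(bθ - bs) - A*(‖θ‖ - ‖θstar‖)| ≤ |bθ - bs| + |A*(‖θ‖ - ‖θstar‖)| :=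
          abs_sub _ _
        have h4 : |A*(‖θ‖ - ‖θstar‖)| = A * |‖θ‖ - ‖θstar‖| := by
          rw [abs_mul, abs_of_nonneg hApos.le]
        have h5 : A * |‖θ‖ - ‖θstar‖| ≤ A * ‖v‖ :=
          mul_le_mul_of_nonneg_left hlipa hApos.le
        calc |(bθ - bs) - A*(‖θ‖ - ‖θstar‖)| ≤ |bθ - bs| + |A*(‖θ‖ - ‖θstar‖)| := h3
          _ = |bθ - bs| + A * |‖θ‖ - ‖θstar‖| := by rw [h4]
          _ ≤ ‖v‖ + A * ‖v‖ := add_le_add hlipb h5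
          _ = (1+A)*‖v‖ := by ring
      calc (bθ - A*‖θ‖)^2 = |bθ - A*‖θ‖|^2 := (sq_abs _).symm
        _ ≤ ((1+A)*‖v‖)^2 := pow_le_pow_left₀ (abs_nonneg _) h1 2
    -- coefficient inequality
    have hcoef : c*εtest*(1+A)^2 ≤ (A*(1+lam) + c*εtest) + (A*εtest^2 + c*εtest*A^2) :=
      coef_aux c εtest lam A hc0 hc1 hε hlam hApos.le
    -- the two identities
    have hFθ : A * F θ = (A*(1+lam) + c*εtest)*bθ^2 + (A*εtest^2 + c*εtest*A^2)*‖θ‖^2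
        - c*εtest*(bθ - A*‖θ‖)^2 := by
      rw [hF θ, ← hbθ2, Real.sqrt_sq hbθ0]
      ring
    have hFs : A * F θstar = (A*(1+lam) + c*εtest)*bs^2 + (A*εtest^2 + c*εtest*A^2)*‖θstar‖^2 := by
      have hbs0 : 0 ≤ bs := Real.sqrt_nonneg _
      rw [hF θstar, ← hbs2, Real.sqrt_sq hbs0, hbA]
      ring
    have e1 : (A*(1+lam) + c*εtest)*(bθ^2 - bs^2)
        = (A*(1+lam) + c*εtest)*(2*⟪θstar - θ₀, v⟫ + ‖v‖^2) := by
      rw [hbθ2, hbs2]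
      rw [show σ₀^2 + ‖θ - θ₀‖^2 - (σ₀^2 + ‖θstar - θ₀‖^2) = ‖θ - θ₀‖^2 - ‖θstar - θ₀‖^2 by ring]
      rw [hnd]; ring
    have e2 : (A*εtest^2 + c*εtest*A^2)*(‖θ‖^2 - ‖θstar‖^2)
        = (A*εtest^2 + c*εtest*A^2)*(2*⟪θstar, v⟫ + ‖v‖^2) := by
      rw [hna]; ring
    have h3 : c*εtest*(bθ - A*‖θ‖)^2
        ≤ ((A*(1+lam) + c*εtest) + (A*εtest^2 + c*εtest*A^2))*‖v‖^2 := by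
      have h4 : c*εtest*(bθ - A*‖θ‖)^2 ≤ c*εtest*((1+A)*‖v‖)^2 :=
        mul_le_mul_of_nonneg_left hcross (mul_nonneg hc0 hε)
      have h5 : c*εtest*((1+A)*‖v‖)^2
          ≤ ((A*(1+lam) + c*εtest) + (A*εtest^2 + c*εtest*A^2))*‖v‖^2 := by
        have h6 := mul_le_mul_of_nonneg_right hcoef (sq_nonneg ‖v‖)
        calc c*εtest*((1+A)*‖v‖)^2 = (c*εtest*(1+A)^2)*‖v‖^2 := by ring
          _ ≤ _ := h6
      linarith
    have hmain : A * F θstar ≤ A * F θ := by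
      rw [hFθ, hFs]
      exact final_aux (A*(1+lam) + c*εtest) (A*εtest^2 + c*εtest*A^2) (c*εtest) ‖v‖
        bθ bs ‖θ‖ ‖θstar‖ A ⟪θstar, v⟫ ⟪θstar - θ₀, v⟫ e1 e2 hip h3
    exact le_of_mul_le_mul_left hmain hApos
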